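/- Wiener's lemma on the circle: for any probability measure μ on the unit circle 𝕋 = ℝ/ℤ, lim_{N→∞} (1/(2N+1)) Σ_{|k|≤N} |μ̂(k)|² = Σ_{x∈𝕋} μ({x})². -/

import Mathlib

open MeasureTheory Filter Topology
open scoped ComplexConjugate


lemma toCircle_zsmul (T : ℝ) (k : ℤ) (x : AddCircle T) :
    AddCircle.toCircle (k • x) = AddCircle.toCircle x ^ k := by
  have h : AddCircle.toCircle ((k • x : AddCircle T)) =
      Additive.toMul (k • Additive.ofMul (AddCircle.toCircle x)) := by
    exact map_zsmul (AddMonoidHom.mk' (fun y : AddCircle T => Additive.ofMul (AddCircle.toCircle y))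
      (fun a b => by simp [AddCircle.toCircle_add])) k x
  simpa using h

lemma fourier_eq_zpow (T : ℝ) (k : ℤ) (x : AddCircle T) :
    fourier k x = ((AddCircle.toCircle x : ℂ)) ^ k := by
  rw [fourier_apply, toCircle_zsmul]
  rfl

lemma Icc_succ (N : ℕ) : Finset.Icc (-(N:ℤ)-1) ((N:ℤ)+1) =
    insert (-(N:ℤ)-1) (insert ((N:ℤ)+1) (Finset.Icc (-(N:ℤ)) N)) := by
  ext k; simp only [Finset.mem_Icc, Finset.mem_insert]; omega

lemma telescope (z : ℂ) (hz : z ≠ 0) (N : ℕ) :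
    (z - 1) * ∑ k ∈ Finset.Icc (-(N:ℤ)) N, z ^ k = z ^ ((N:ℤ)+1) - z ^ (-(N:ℤ)) := by
  induction N with
  | zero => simp [sub_mul, zpow_one]
  | succ n ih =>
      have h1 : (-(↑(n+1):ℤ)) = -(n:ℤ) - 1 := by push_cast; ring
      have h2 : ((↑(n+1):ℤ)) = (n:ℤ) + 1 := by push_cast; ring
      rw [h1, h2, Icc_succ]
      rw [Finset.sum_insert (by simp only [Finset.mem_Icc, Finset.mem_insert]; omega),
          Finset.sum_insert (by simp only [Finset.mem_Icc]; omega)]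
      have e1 : z ^ (-(n:ℤ)-1) * z = z ^ (-(n:ℤ)) := by
        rw [← zpow_add_one₀ hz]; ring_nf
      have e2 : z ^ ((n:ℤ)+1) * z = z ^ ((n:ℤ)+1+1) := by
        rw [← zpow_add_one₀ hz]
      calc (z-1) * (z^(-(n:ℤ)-1) + (z^((n:ℤ)+1) + ∑ k ∈ Finset.Icc (-(n:ℤ)) n, z ^ k))
          = (z-1) * ∑ k ∈ Finset.Icc (-(n:ℤ)) n, z ^ k
            + (z^(-(n:ℤ)-1)*z - z^(-(n:ℤ)-1)) + (z^((n:ℤ)+1)*z - z^((n:ℤ)+1)) := by ring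
        _ = z ^ ((n:ℤ)+1+1) - z ^ (-(n:ℤ)-1) := by rw [ih, e1, e2]; ring

lemma card_Icc_int (N : ℕ) : (Finset.Icc (-(N:ℤ)) N).card = 2*N+1 := by
  rw [Int.card_Icc]; omega

lemma neg_sum_eq (N : ℕ) (z : ℂ) :
    ∑ k ∈ Finset.Icc (-(N:ℤ)) N, z ^ (-k) = ∑ k ∈ Finset.Icc (-(N:ℤ)) N, z ^ k := by
  exact Finset.sum_equiv (Equiv.neg ℤ)
    (fun k => by simp only [Finset.mem_Icc, Equiv.neg_apply]; omega) (fun k _ => rfl)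

lemma inv_factor_tendsto : Tendsto (fun N : ℕ => (1 / (2*(N:ℝ)+1))) atTop (𝓝 0) := by
  have h1 : Tendsto (fun N : ℕ => 2*(N:ℝ)+1) atTop atTop :=
    tendsto_atTop_add_const_right _ 1 (tendsto_natCast_atTop_atTop.const_mul_atTop two_pos)
  simpa only [one_div, Pi.inv_def] using h1.inv_tendsto_atTop

lemma kernel_tendsto (t : UnitAddCircle) (ht : t ≠ 0) :
    Tendsto (fun N : ℕ => ((1/(2*(N:ℝ)+1) : ℝ) : ℂ) *
      ∑ k ∈ Finset.Icc (-(N:ℤ)) N, fourier (-k) t) atTop (𝓝 0) := by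
  set z : ℂ := (AddCircle.toCircle t : ℂ) with hzdef
  have hznorm : ‖z‖ = 1 := Circle.norm_coe _
  have hz0 : z ≠ 0 := by intro h; rw [h] at hznorm; simp at hznorm
  have hz1 : z ≠ 1 := by
    intro h
    apply ht
    have h2 : (AddCircle.toCircle t : ℂ) = (AddCircle.toCircle (0 : UnitAddCircle) : ℂ) := by
      rw [← hzdef, h]; exact (fourier_zero').symm
    exact AddCircle.injective_toCircle one_ne_zero (Subtype.coe_injective h2)
  have hpos : 0 < ‖z - 1‖ := by
    rw [norm_pos_iff, sub_ne_zero]; exact hz1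
  have hsum : ∀ N : ℕ, ∑ k ∈ Finset.Icc (-(N:ℤ)) N, fourier (-k) t
      = ∑ k ∈ Finset.Icc (-(N:ℤ)) N, z ^ k := by
    intro N
    rw [← neg_sum_eq]
    exact Finset.sum_congr rfl fun k _ => fourier_eq_zpow 1 (-k) t
  have hb : ∀ N : ℕ, ‖∑ k ∈ Finset.Icc (-(N:ℤ)) N, z ^ k‖ ≤ 2 / ‖z - 1‖ := by
    intro N
    rw [le_div_iff₀ hpos]
    calc ‖∑ k ∈ Finset.Icc (-(N:ℤ)) N, z ^ k‖ * ‖z - 1‖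
        = ‖(z - 1) * ∑ k ∈ Finset.Icc (-(N:ℤ)) N, z ^ k‖ := by
          rw [norm_mul, mul_comm]
      _ = ‖z ^ ((N:ℤ)+1) - z ^ (-(N:ℤ))‖ := by rw [telescope z hz0 N]
      _ ≤ ‖z ^ ((N:ℤ)+1)‖ + ‖z ^ (-(N:ℤ))‖ := norm_sub_le _ _
      _ = 2 := by rw [norm_zpow, norm_zpow, hznorm, one_zpow, one_zpow]; norm_num
  have hg : Tendsto (fun N : ℕ => (1/(2*(N:ℝ)+1)) * (2 / ‖z - 1‖)) atTop (𝓝 0) := by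
    have := inv_factor_tendsto.mul_const (2 / ‖z - 1‖)
    rwa [zero_mul] at this
  refine squeeze_zero_norm (fun N => ?_) hg
  have hnn : (0:ℝ) ≤ 1/(2*(N:ℝ)+1) := by positivity
  rw [hsum, norm_mul, Complex.norm_real, Real.norm_eq_abs, abs_of_nonneg hnn]
  exact mul_le_mul_of_nonneg_left (hb N) hnn

lemma kernel_at_zero (N : ℕ) :
    ((1/(2*(N:ℝ)+1) : ℝ) : ℂ) * ∑ k ∈ Finset.Icc (-(N:ℤ)) N, fourier (-k) (0:UnitAddCircle)
      = 1 := by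
  have : ∑ k ∈ Finset.Icc (-(N:ℤ)) N, fourier (-k) (0:UnitAddCircle)
      = ((2*(N:ℝ)+1 : ℝ) : ℂ) := by
    rw [Finset.sum_congr rfl fun k _ => fourier_eval_zero (-k), Finset.sum_const, card_Icc_int]
    push_cast; ring
  have hne : (2*(N:ℝ)+1) ≠ 0 := by positivity
  rw [this, ← Complex.ofReal_mul, one_div, inv_mul_cancel₀ hne, Complex.ofReal_one]


lemma diag_measure (μ : Measure UnitAddCircle) [IsProbabilityMeasure μ] :
    ((μ.prod μ) {p : UnitAddCircle × UnitAddCircle | p.1 = p.2}).toReal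
      = ∑' x : UnitAddCircle, (μ {x}).toReal ^ 2 := by
  have hD : MeasurableSet {p : UnitAddCircle × UnitAddCircle | p.1 = p.2} :=
    (isClosed_eq continuous_fst continuous_snd).measurableSet
  have h1 : (μ.prod μ) {p : UnitAddCircle × UnitAddCircle | p.1 = p.2}
      = ∫⁻ x, μ {x} ∂μ := by
    rw [Measure.prod_apply hD]
    congr 1
    ext x
    congr 1
    ext y
    simp [eq_comm]
  set S : Set UnitAddCircle := {x | μ {x} ≠ 0} with hS
  have hScnt : S.Countable := by
    have h := Measure.countable_meas_pos_of_disjoint_iUnion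
      (μ := μ) (As := fun x : UnitAddCircle => {x})
      (fun x => measurableSet_singleton x)
      (fun x y hxy => by simp [Function.onFun, hxy])
    refine h.mono fun x hx => ?_
    simpa [hS, pos_iff_ne_zero] using hx
  have hSmeas : MeasurableSet S := hScnt.measurableSet
  have hind : (fun x => μ {x}) = S.indicator (fun x => μ {x}) := by
    funext x
    by_cases hx : x ∈ S
    · rw [Set.indicator_of_mem hx]
    · rw [Set.indicator_of_notMem hx]
      simpa [hS] using hx
  have h2 : ∫⁻ x, μ {x} ∂μ = ∑' x : S, μ {(x:UnitAddCircle)} * μ {(x:UnitAddCircle)} := by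
    rw [hind, lintegral_indicator hSmeas, lintegral_countable _ hScnt]
  have h3 : ∑' x : S, μ {(x:UnitAddCircle)} * μ {(x:UnitAddCircle)}
      = ∑' x : UnitAddCircle, μ {x} * μ {x} := by
    rw [tsum_subtype S (fun x => μ {x} * μ {x})]
    congr 1
    funext x
    by_cases hx : x ∈ S
    · rw [Set.indicator_of_mem hx]
    · rw [Set.indicator_of_notMem hx]
      have : μ {x} = 0 := by simpa [hS] using hx
      simp [this]
  rw [h1, h2, h3, ENNReal.tsum_toReal_eq
    (fun x => ENNReal.mul_ne_top (measure_ne_top μ _) (measure_ne_top μ _))]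
  congr 1
  funext x
  rw [ENNReal.toReal_mul, sq]

lemma fourier_sub (k : ℤ) (x y : UnitAddCircle) :
    fourier k (x - y) = fourier k x * fourier (-k) y := by
  have h : k • (x - y) = k • x + (-k) • y := by rw [smul_sub, sub_eq_add_neg, neg_smul]
  rw [fourier_apply, fourier_apply, fourier_apply, h, AddCircle.toCircle_add, Circle.coe_mul]

lemma integrable_fourier_sub (μ : Measure UnitAddCircle) [IsProbabilityMeasure μ] (k : ℤ) :
    Integrable (fun p : UnitAddCircle × UnitAddCircle => fourier (-k) (p.1 - p.2)) (μ.prod μ) := by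
  have hc : Continuous (fun p : UnitAddCircle × UnitAddCircle => fourier (-k) (p.1 - p.2)) :=
    (map_continuous (fourier (-k))).comp (continuous_fst.sub continuous_snd)
  refine (integrable_const (1:ℝ)).mono' hc.aestronglyMeasurable ?_
  filter_upwards with p
  simp [Circle.norm_coe, fourier_apply]

lemma coeff_sq (μ : Measure UnitAddCircle) [IsProbabilityMeasure μ] (k : ℤ) :
    ((‖∫ x, fourier (-k) x ∂μ‖^2 : ℝ) : ℂ)
      = ∫ p : UnitAddCircle × UnitAddCircle, fourier (-k) (p.1 - p.2) ∂(μ.prod μ) := by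
  have h1 : ∀ p : UnitAddCircle × UnitAddCircle,
      fourier (-k) (p.1 - p.2) = fourier (-k) p.1 * conj (fourier (-k) p.2) := by
    intro p
    rw [fourier_sub, neg_neg, ← fourier_neg, neg_neg]
  calc ((‖∫ x, fourier (-k) x ∂μ‖^2 : ℝ) : ℂ)
      = (∫ x, fourier (-k) x ∂μ) * conj (∫ x, fourier (-k) x ∂μ) := by
        rw [Complex.mul_conj, Complex.normSq_eq_norm_sq]
    _ = (∫ x, fourier (-k) x ∂μ) * (∫ y, conj (fourier (-k) y) ∂μ) := by rw [integral_conj]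
    _ = ∫ p : UnitAddCircle × UnitAddCircle,
          fourier (-k) p.1 * conj (fourier (-k) p.2) ∂(μ.prod μ) := by
        rw [integral_prod_mul (fun x => fourier (-k) x) (fun y => conj (fourier (-k) y))]
    _ = ∫ p : UnitAddCircle × UnitAddCircle, fourier (-k) (p.1 - p.2) ∂(μ.prod μ) := by
        simp_rw [h1]


/-- Wiener's lemma on the circle:
`(1/(2N+1)) Σ_{|k|≤N} |μ̂(k)|² → Σ_x μ({x})²`. -/
theorem wiener_lemma_circle (μ : Measure UnitAddCircle) [IsProbabilityMeasure μ] :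
    Tendsto (fun N : ℕ => (1 / (2 * (N : ℝ) + 1)) *
        ∑ k ∈ Finset.Icc (-(N : ℤ)) (N : ℤ), ‖∫ x, fourier (-k) x ∂μ‖ ^ 2)
      atTop (𝓝 (∑' x : UnitAddCircle, (μ {x}).toReal ^ 2)) := by
  set D : Set (UnitAddCircle × UnitAddCircle) := {p | p.1 = p.2} with hDdef
  have hD : MeasurableSet D := (isClosed_eq continuous_fst continuous_snd).measurableSet
  set F : ℕ → UnitAddCircle × UnitAddCircle → ℂ := fun N p =>
    ((1/(2*(N:ℝ)+1) : ℝ) : ℂ) * ∑ k ∈ Finset.Icc (-(N:ℤ)) N, fourier (-k) (p.1 - p.2) with hF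
  have key : Tendsto (fun N : ℕ => ∫ p, F N p ∂(μ.prod μ)) atTop
      (𝓝 (∫ p, D.indicator (fun _ => (1:ℂ)) p ∂(μ.prod μ))) := by
    apply tendsto_integral_of_dominated_convergence (bound := fun _ => (1:ℝ))
    · intro N
      have hc : Continuous (F N) := by
        apply continuous_const.mul
        exact continuous_finset_sum _ fun k _ =>
          (map_continuous (fourier (-k))).comp (continuous_fst.sub continuous_snd)
      exact hc.aestronglyMeasurable
    · exact integrable_const 1
    · intro N
      filter_upwards with p
      rw [hF]
      simp only
      rw [norm_mul, Complex.norm_real, Real.norm_eq_abs,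
        abs_of_nonneg (by positivity : (0:ℝ) ≤ 1/(2*(N:ℝ)+1))]
      have hb : ‖∑ k ∈ Finset.Icc (-(N:ℤ)) N, fourier (-k) (p.1 - p.2)‖ ≤ 2*(N:ℝ)+1 := by
        refine (norm_sum_le _ _).trans ?_
        have : ∀ k ∈ Finset.Icc (-(N:ℤ)) N, ‖fourier (-k) (p.1 - p.2)‖ = 1 := by
          intro k _; rw [fourier_apply]; exact Circle.norm_coe _
        rw [Finset.sum_congr rfl this, Finset.sum_const, card_Icc_int]
        simp
      calc (1/(2*(N:ℝ)+1)) * ‖∑ k ∈ Finset.Icc (-(N:ℤ)) N, fourier (-k) (p.1 - p.2)‖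
          ≤ (1/(2*(N:ℝ)+1)) * (2*(N:ℝ)+1) :=
            mul_le_mul_of_nonneg_left hb (by positivity)
        _ = 1 := by rw [one_div, inv_mul_cancel₀ (by positivity)]
    · filter_upwards with p
      by_cases hp : p.1 = p.2
      · have h0 : p.1 - p.2 = 0 := sub_eq_zero.mpr hp
        have hind : D.indicator (fun _ => (1:ℂ)) p = 1 :=
          Set.indicator_of_mem (by exact hp) _
        rw [hind]
        have : (fun N : ℕ => F N p) = fun _ => (1:ℂ) := by
          funext N
          rw [hF]; simp only
          rw [h0]
          exact kernel_at_zero N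
        rw [this]
        exact tendsto_const_nhds
      · have h0 : p.1 - p.2 ≠ 0 := sub_ne_zero.mpr hp
        have hind : D.indicator (fun _ => (1:ℂ)) p = 0 :=
          Set.indicator_of_notMem (by exact hp) _
        rw [hind]
        exact kernel_tendsto _ h0
  have hval : ∫ p, D.indicator (fun _ => (1:ℂ)) p ∂(μ.prod μ)
      = ((((μ.prod μ) D).toReal : ℝ) : ℂ) := by
    rw [integral_indicator_const (1:ℂ) hD, Complex.real_smul, mul_one, measureReal_def]
  have heq : ∀ N : ℕ, ∫ p, F N p ∂(μ.prod μ)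
      = (((1 / (2 * (N : ℝ) + 1)) *
          ∑ k ∈ Finset.Icc (-(N:ℤ)) N, ‖∫ x, fourier (-k) x ∂μ‖ ^ 2 : ℝ) : ℂ) := by
    intro N
    rw [hF]
    simp only
    rw [integral_const_mul,
      integral_finset_sum _ (fun k _ => integrable_fourier_sub μ k)]
    simp_rw [← coeff_sq μ]
    push_cast
    ring
  rw [hval] at key
  have key2 := (Complex.continuous_re.tendsto _).comp key
  simp only [Function.comp_def] at key2
  have : (fun N : ℕ => (∫ p, F N p ∂(μ.prod μ)).re)
      = fun N : ℕ => (1 / (2 * (N : ℝ) + 1)) *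
          ∑ k ∈ Finset.Icc (-(N:ℤ)) N, ‖∫ x, fourier (-k) x ∂μ‖ ^ 2 := by
    funext N; rw [heq N, Complex.ofReal_re]
  rw [this, Complex.ofReal_re] at key2
  rw [← diag_measure μ]
  exact key2
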